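/- For every even integer m ≥ 6, the girth of the graph H_m is 4, i.e., the length of a shortest cycle in H_m is 4. -/

import Mathlib

open SimpleGraph

/-- Vertex type for the graphs on `2m+1` vertices: `Sum.inl i` is the vertex `pᵢ`,
`Sum.inr (Sum.inl i)` is the vertex `qᵢ` (indices taken modulo `m`),
and `Sum.inr (Sum.inr ())` is the apex vertex `a`. -/
abbrev GVert (m : ℕ) := Sum (ZMod m) (Sum (ZMod m) Unit)

/-- The vertex `pᵢ`. -/
def pV {m : ℕ} (i : ZMod m) : GVert m := Sum.inl i

/-- The vertex `qᵢ`. -/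
def qV {m : ℕ} (i : ZMod m) : GVert m := Sum.inr (Sum.inl i)

/-- The apex vertex `a`. -/
def aV (m : ℕ) : GVert m := Sum.inr (Sum.inr ())

/-- The graph `H_m` (intended for even `m ≥ 6`): edges are `a qᵢ` for all `i`,
`pᵢ pᵢ₊₁` for all `i`, and `pᵢ q_{i + (2k-1)}` for all `i` and `0 ≤ k ≤ (m-2)/2`,
all indices taken modulo `m`. -/
def HGraph (m : ℕ) : SimpleGraph (GVert m) :=
  SimpleGraph.fromRel (fun u v =>
    (∃ i : ZMod m, u = aV m ∧ v = qV i) ∨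
    (∃ i : ZMod m, u = pV i ∧ v = pV (i + 1)) ∨
    (∃ (i : ZMod m) (k : ℕ), k ≤ (m - 2) / 2 ∧
      u = pV i ∧ v = qV (i + (2 * (k : ZMod m) - 1))))

lemma not_adj_qq {m : ℕ} (i j : ZMod m) : ¬ (HGraph m).Adj (qV i) (qV j) := by
  simp [HGraph, fromRel_adj, pV, qV, aV]

lemma not_adj_ap {m : ℕ} (i : ZMod m) : ¬ (HGraph m).Adj (aV m) (pV i) := by
  simp [HGraph, fromRel_adj, pV, qV, aV]

lemma adj_odd {m : ℕ} (hd : (2:ℕ) ∣ m) {i j : ZMod m}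
    (h : (HGraph m).Adj (pV i) (pV j) ∨ (HGraph m).Adj (pV i) (qV j)) :
    ZMod.castHom hd (ZMod 2) (j - i) = 1 := by
  have h2 : ZMod.castHom hd (ZMod 2) 2 = 0 := by
    have e : ((2:ℕ) : ZMod m) = (2 : ZMod m) := by push_cast; ring
    rw [← e, map_natCast, ZMod.natCast_self]
  rcases h with h | h
  · rw [HGraph, fromRel_adj] at h
    simp [pV, qV, aV] at h
    rcases h.2 with h' | h'
    · rw [h', add_sub_cancel_left, map_one]
    · rw [h', show j - (j + 1) = -1 from by ring, map_neg, map_one]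
      decide
  · rw [HGraph, fromRel_adj] at h
    simp [pV, qV, aV] at h
    obtain ⟨i', k, _, rfl, rfl⟩ := h
    rw [add_sub_cancel_left, map_sub, map_mul, map_one, map_natCast, h2, zero_mul,
      zero_sub]
    decide

lemma noTriangle {m : ℕ} (hd : (2:ℕ) ∣ m) {u v w : GVert m}
    (h1 : (HGraph m).Adj u v) (h2 : (HGraph m).Adj v w) (h3 : (HGraph m).Adj w u) :
    False := by
  set c := ZMod.castHom hd (ZMod 2) with hc
  have oswap : ∀ x y : ZMod m, c (x - y) = 1 → c (y - x) = 1 := by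
    intro x y h
    rw [show y - x = -(x - y) from by ring, map_neg, h]
    decide
  have key : ∀ x y z : ZMod m, c (y - x) = 1 → c (z - y) = 1 → c (x - z) = 1 → False := by
    intro x y z a b d
    have : c (y - x) + c (z - y) + c (x - z) = 0 := by
      rw [← map_add, ← map_add, show y - x + (z - y) + (x - z) = 0 from by ring, map_zero]
    rw [a, b, d] at this
    exact absurd this (by decide)
  rcases u with i | i | _ <;> rcases v with j | j | _ <;> rcases w with l | l | _
  · exact key i j l (adj_odd hd (Or.inl h1)) (adj_odd hd (Or.inl h2)) (adj_odd hd (Or.inl h3))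
  · exact key i j l (adj_odd hd (Or.inl h1)) (adj_odd hd (Or.inr h2))
      (oswap l i (adj_odd hd (Or.inr h3.symm)))
  · exact not_adj_ap j h2.symm
  · exact key i j l (adj_odd hd (Or.inr h1)) (oswap j l (adj_odd hd (Or.inr h2.symm)))
      (adj_odd hd (Or.inl h3))
  · exact not_adj_qq j l h2
  · exact not_adj_ap i h3
  · exact not_adj_ap i h1.symm
  · exact not_adj_ap i h1.symm
  · exact not_adj_ap i h1.symm
  · exact key i j l (oswap i j (adj_odd hd (Or.inr h1.symm))) (adj_odd hd (Or.inl h2))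
      (adj_odd hd (Or.inr h3))
  · exact not_adj_qq l i h3
  · exact not_adj_ap j h2.symm
  · exact not_adj_qq i j h1
  · exact not_adj_qq i j h1
  · exact not_adj_qq i j h1
  · exact not_adj_ap l h2
  · exact not_adj_qq l i h3
  · exact (HGraph m).irrefl h2
  · exact not_adj_ap j h1
  · exact not_adj_ap j h1
  · exact not_adj_ap j h1
  · exact not_adj_ap l h3.symm
  · exact not_adj_qq j l h2
  · exact (HGraph m).irrefl h3
  · exact (HGraph m).irrefl h1
  · exact (HGraph m).irrefl h1
  · exact (HGraph m).irrefl h1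

/-- For every even integer `m ≥ 6`, the girth of the graph `H_m` is `4`. -/
theorem hGraph_girth (m : ℕ) (h6 : 6 ≤ m) (heven : Even m) :
    (HGraph m).girth = 4 := by
  haveI : NeZero m := ⟨by omega⟩
  have hd : (2:ℕ) ∣ m := heven.two_dvd
  have hne02 : (0 : ZMod m) ≠ 2 := by
    intro h
    have h2 : ((2:ℕ) : ZMod m) = 0 := by push_cast; exact h.symm
    rw [ZMod.natCast_eq_zero_iff] at h2
    exact absurd (Nat.le_of_dvd (by norm_num) h2) (by omega)
  have haq0 : (HGraph m).Adj (aV m) (qV 0) := by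
    rw [HGraph, fromRel_adj]
    refine ⟨by simp [aV, qV], Or.inl (Or.inl ⟨0, rfl, rfl⟩)⟩
  have hq0p1 : (HGraph m).Adj (qV 0) (pV 1) := by
    rw [HGraph, fromRel_adj]
    refine ⟨by simp [pV, qV], Or.inr (Or.inr (Or.inr ⟨1, 0, by omega, rfl, ?_⟩))⟩
    rw [show (1 : ZMod m) + (2 * ((0:ℕ) : ZMod m) - 1) = 0 from by push_cast; ring]
  have hp1q2 : (HGraph m).Adj (pV 1) (qV 2) := by
    rw [HGraph, fromRel_adj]
    refine ⟨by simp [pV, qV], Or.inl (Or.inr (Or.inr ⟨1, 1, by omega, rfl, ?_⟩))⟩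
    rw [show (1 : ZMod m) + (2 * ((1:ℕ) : ZMod m) - 1) = 2 from by push_cast; ring]
  have hq2a : (HGraph m).Adj (qV 2) (aV m) := by
    rw [HGraph, fromRel_adj]
    refine ⟨by simp [aV, qV], Or.inr (Or.inl ⟨2, rfl, rfl⟩)⟩
  let w : (HGraph m).Walk (aV m) (aV m) :=
    .cons haq0 (.cons hq0p1 (.cons hp1q2 (.cons hq2a .nil)))
  have hcyc : w.IsCycle := by
    simp only [w]
    simp only [Walk.isCycle_def, Walk.isTrail_def, Walk.edges_cons, Walk.support_cons, Walk.edges_nil,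
      Walk.support_nil, List.tail_cons]
    refine ⟨?_, nofun, ?_⟩ <;> simp [aV, qV, pV, hne02]
  have hle : (HGraph m).egirth ≤ 4 := by
    have h1 : (HGraph m).egirth ≤ (w.length : ℕ∞) := by
      rw [egirth]
      exact iInf_le_of_le (aV m) (iInf_le_of_le w (iInf_le _ hcyc))
    simpa [w] using h1
  have hge : (4 : ℕ∞) ≤ (HGraph m).egirth := by
    rw [le_egirth]
    intro a w' hw'
    by_contra hlt
    push_neg at hlt
    have hlen3 : w'.length = 3 := by
      have h3 := hw'.three_le_length
      have : w'.length < 4 := by exact_mod_cast hlt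
      omega
    clear hlt hw'
    cases w' with
    | nil => simp at hlen3
    | cons h1 w1 =>
      cases w1 with
      | nil => simp at hlen3
      | cons h2 w2 =>
        cases w2 with
        | nil => simp at hlen3
        | cons h3 w3 =>
          cases w3 with
          | cons h4 w4 => simp [Walk.length_cons] at hlen3
          | nil => exact noTriangle hd h1 h2 h3
  have hegirth : (HGraph m).egirth = 4 := le_antisymm hle hge
  rw [girth, hegirth]
  rfl
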